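/- Let L ∈ ℤ, and let ψ : Γ × Γ × G/N → U(1) and ψ̂ : Γ × Γ × Ĝ/N⊥ → U(1) satisfy: (a) ψ(a, b, z) · ψ̂(a, b, ẑ)⁻¹ = ((χ⊔χ̂)(a, b, z, ẑ))^L for all a, b ∈ Γ, z ∈ G/N, ẑ ∈ Ĝ/N⊥, and (b) ψ̂(b, c, ẑ + χ̂(a)) · ψ̂(ba, c, ẑ)⁻¹ · ψ̂(a, cb, ẑ) · ψ̂(a, b, ẑ)⁻¹ = 1 for all a, b, c ∈ Γ, ẑ ∈ Ĝ/N⊥. Define ψ'(a, b, ẑ) := γ(a,b)^{−L} · ⟨ẑ, η(a,b)⟩⁻¹ · ψ(a, b, 0) and ν(a, z) := ⟨L·σ̂(χ̂(a)) − σ̂(L·χ̂(a)), z + χ(a)⟩ (note L·σ̂(χ̂(a)) − σ̂(L·χ̂(a)) ∈ N⊥). Let (χ⊔(Lχ̂)) denote the function defined exactly as (χ⊔χ̂) but with χ̂ replaced by the homomorphism L·χ̂ (and the same sections σ, σ̂). Then: (1) ψ'(b, c, ẑ + L·χ̂(a)) · ψ'(ba, c, ẑ)⁻¹ · ψ'(a,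 cb, ẑ) · ψ'(a, b, ẑ)⁻¹ = 1 for all a, b, c ∈ Γ, ẑ ∈ Ĝ/N⊥; (2) ψ(a, b, z) · ψ'(a, b, ẑ)⁻¹ · ν(b, z + χ(a)) · ν(ba, z)⁻¹ · ν(a, z) = (χ⊔(Lχ̂))(a, b, z, ẑ) for all a, b ∈ Γ, z ∈ G/N, ẑ ∈ Ĝ/N⊥. -/

import Mathlib

/-- Let `L ∈ ℤ`, and let `ψ`, `ψ̂` satisfy (a) the regularity equation
`ψ(a,b,z) · ψ̂(a,b,ẑ)⁻¹ = ((χ⊔χ̂)(a,b,z,ẑ))^L` and (b) the cocycle identity for `ψ̂`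
with respect to `χ̂`.  With
`ψ'(a,b,ẑ) := γ(a,b)^{−L} · ⟨ẑ, η(a,b)⟩⁻¹ · ψ(a,b,0)` and
`ν(a,z) := ⟨L·σ̂(χ̂(a)) − σ̂(L·χ̂(a)), z + χ(a)⟩`, and `χ⊔(Lχ̂)` defined exactly as
`χ⊔χ̂` but with `χ̂` replaced by `L·χ̂` (same sections):
(1) `ψ'` satisfies the cocycle identity for the shifted homomorphism `L·χ̂`, and
(2) `ψ(a,b,z) · ψ'(a,b,ẑ)⁻¹ · ν(b,z+χ(a)) · ν(ba,z)⁻¹ · ν(a,z) = (χ⊔(Lχ̂))(a,b,z,ẑ)`. -/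
theorem statement9
    {Γ : Type*} [Group Γ] [Finite Γ]
    {G : Type*} [AddCommGroup G] [TopologicalSpace G] [IsTopologicalAddGroup G]
      [LocallyCompactSpace G] [SecondCountableTopology G] [T2Space G]
    (N : AddSubgroup G) [DiscreteTopology N] [CompactSpace (G ⧸ N)]
    -- the Pontryagin dual of `G`, abstracted by its pairing with `G`
    {Ghat : Type*} [AddCommGroup Ghat]
    (e : Ghat → G → Circle)
    (he₁ : ∀ (x y : Ghat) (g : G), e (x + y) g = e x g * e y g)
    (he₂ : ∀ (x : Ghat) (g h : G), e x (g + h) = e x g * e x h)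
    -- the annihilator `N⊥` of `N`
    (Nperp : AddSubgroup Ghat)
    (hNperp : ∀ x : Ghat, x ∈ Nperp ↔ ∀ n ∈ N, e x (n : G) = 1)
    -- the well-defined pairing of `Ĝ/N⊥` with `N`
    (eQN : Ghat ⧸ Nperp → N → Circle)
    (heQN : ∀ (x : Ghat) (n : N), eQN (x : Ghat ⧸ Nperp) n = e x (n : G))
    -- the well-defined pairing of `N⊥` with `G/N`
    (ePQ : Nperp → G ⧸ N → Circle)
    (hePQ : ∀ (p : Nperp) (g : G), ePQ p ((g : G) : G ⧸ N) = e (p : Ghat) g)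
    -- the homomorphisms `χ` and `χ̂`
    (χ : Γ → G ⧸ N) (hχ : ∀ a b : Γ, χ (a * b) = χ a + χ b)
    (χhat : Γ → Ghat ⧸ Nperp) (hχhat : ∀ a b : Γ, χhat (a * b) = χhat a + χhat b)
    -- set-theoretic sections `σ` and `σ̂` of the quotient maps
    (σ : G ⧸ N → G) (hσ : ∀ z : G ⧸ N, ((σ z : G) : G ⧸ N) = z)
    (σh : Ghat ⧸ Nperp → Ghat) (hσh : ∀ zh : Ghat ⧸ Nperp, ((σh zh : Ghat) : Ghat ⧸ Nperp) = zh)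
    -- `η(a,b) ∈ N` and `η̂(a,b) ∈ N⊥`
    (hη : ∀ a b : Γ, σ (χ b) - σ (χ (b * a)) + σ (χ a) ∈ N)
    (hηhat : ∀ a b : Γ, σh (χhat b) - σh (χhat (b * a)) + σh (χhat a) ∈ Nperp)
    -- `γ` and the cocycle `χ⊔χ̂`
    (γ : Γ → Γ → Circle)
    (hγ : ∀ a b : Γ, γ a b = e (σh (χhat a)) (σ (χ b)) *
      (ePQ ⟨σh (χhat b) - σh (χhat (b * a)) + σh (χhat a), hηhat a b⟩ (χ (b * a)))⁻¹)
    (sq : Γ → Γ → G ⧸ N → Ghat ⧸ Nperp → Circle)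
    (hsq : ∀ (a b : Γ) (z : G ⧸ N) (zh : Ghat ⧸ Nperp),
      sq a b z zh = γ a b *
        (ePQ ⟨σh (χhat b) - σh (χhat (b * a)) + σh (χhat a), hηhat a b⟩ z)⁻¹ *
        eQN zh ⟨σ (χ b) - σ (χ (b * a)) + σ (χ a), hη a b⟩)
    -- the data `χ⊔(Lχ̂)`, built exactly as `χ⊔χ̂` but for the homomorphism `L·χ̂`
    (L : ℤ)
    (hηhatL : ∀ a b : Γ,
      σh (L • χhat b) - σh (L • χhat (b * a)) + σh (L • χhat a) ∈ Nperp)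
    (γL : Γ → Γ → Circle)
    (hγL : ∀ a b : Γ, γL a b = e (σh (L • χhat a)) (σ (χ b)) *
      (ePQ ⟨σh (L • χhat b) - σh (L • χhat (b * a)) + σh (L • χhat a), hηhatL a b⟩
        (χ (b * a)))⁻¹)
    (sqL : Γ → Γ → G ⧸ N → Ghat ⧸ Nperp → Circle)
    (hsqL : ∀ (a b : Γ) (z : G ⧸ N) (zh : Ghat ⧸ Nperp),
      sqL a b z zh = γL a b *
        (ePQ ⟨σh (L • χhat b) - σh (L • χhat (b * a)) + σh (L • χhat a), hηhatL a b⟩ z)⁻¹ *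
        eQN zh ⟨σ (χ b) - σ (χ (b * a)) + σ (χ a), hη a b⟩)
    -- the hypotheses (a) and (b)
    (ψ : Γ → Γ → (G ⧸ N) → Circle) (ψhat : Γ → Γ → (Ghat ⧸ Nperp) → Circle)
    (hreg : ∀ (a b : Γ) (z : G ⧸ N) (zh : Ghat ⧸ Nperp),
      ψ a b z * (ψhat a b zh)⁻¹ = (sq a b z zh) ^ L)
    (hcoc : ∀ (a b c : Γ) (zh : Ghat ⧸ Nperp),
      ψhat b c (zh + χhat a) * (ψhat (b * a) c zh)⁻¹ * ψhat a (c * b) zh *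
        (ψhat a b zh)⁻¹ = 1)
    -- `ψ'(a,b,ẑ) := γ(a,b)^{−L} · ⟨ẑ, η(a,b)⟩⁻¹ · ψ(a,b,0)`
    (ψ' : Γ → Γ → (Ghat ⧸ Nperp) → Circle)
    (hψ' : ∀ (a b : Γ) (zh : Ghat ⧸ Nperp),
      ψ' a b zh = (γ a b) ^ (-L) *
        (eQN zh ⟨σ (χ b) - σ (χ (b * a)) + σ (χ a), hη a b⟩)⁻¹ * ψ a b 0)
    -- `ν(a,z) := ⟨L·σ̂(χ̂(a)) − σ̂(L·χ̂(a)), z + χ(a)⟩`, noting the element lies in `N⊥`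
    (hν : ∀ a : Γ, L • σh (χhat a) - σh (L • χhat a) ∈ Nperp)
    (ν : Γ → (G ⧸ N) → Circle)
    (hνdef : ∀ (a : Γ) (z : G ⧸ N),
      ν a z = ePQ ⟨L • σh (χhat a) - σh (L • χhat a), hν a⟩ (z + χ a)) :
    -- (1) `ψ'` is a cocycle for the shifted homomorphism `L·χ̂`
    (∀ (a b c : Γ) (zh : Ghat ⧸ Nperp),
      ψ' b c (zh + L • χhat a) * (ψ' (b * a) c zh)⁻¹ * ψ' a (c * b) zh *
        (ψ' a b zh)⁻¹ = 1) ∧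
    -- (2) the order-1 regularity equation up to the coboundary of `ν`
    (∀ (a b : Γ) (z : G ⧸ N) (zh : Ghat ⧸ Nperp),
      ψ a b z * (ψ' a b zh)⁻¹ * ν b (z + χ a) * (ν (b * a) z)⁻¹ * ν a z =
        sqL a b z zh) := by
  classical
  -- basic additive lemmas for the pairing
  have e_zero : ∀ g : G, e 0 g = 1 := by
    intro g
    have h := he₁ 0 0 g
    rw [add_zero] at h
    exact (left_eq_mul.mp h)
  let F : G → Ghat →+ Additive Circle := fun g =>
    AddMonoidHom.mk' (fun x => Additive.ofMul (e x g))
      (fun x y => congrArg Additive.ofMul (he₁ x y g))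
  let F' : Ghat → G →+ Additive Circle := fun x =>
    AddMonoidHom.mk' (fun g => Additive.ofMul (e x g))
      (fun g h => congrArg Additive.ofMul (he₂ x g h))
  have Ea : ∀ (x y : Ghat) (g : G),
      Additive.ofMul (e (x + y) g) = Additive.ofMul (e x g) + Additive.ofMul (e y g) :=
    fun x y g => (F g).map_add x y
  have Es : ∀ (x y : Ghat) (g : G),
      Additive.ofMul (e (x - y) g) = Additive.ofMul (e x g) - Additive.ofMul (e y g) :=
    fun x y g => (F g).map_sub x y
  have Ez : ∀ (n : ℤ) (x : Ghat) (g : G),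
      Additive.ofMul (e (n • x) g) = n • Additive.ofMul (e x g) :=
    fun n x g => map_zsmul (F g) n x
  have Ea' : ∀ (x : Ghat) (g h : G),
      Additive.ofMul (e x (g + h)) = Additive.ofMul (e x g) + Additive.ofMul (e x h) :=
    fun x g h => (F' x).map_add g h
  have Es' : ∀ (x : Ghat) (g h : G),
      Additive.ofMul (e x (g - h)) = Additive.ofMul (e x g) - Additive.ofMul (e x h) :=
    fun x g h => (F' x).map_sub g h
  -- vanishing on N for elements of Nperp
  have TeN : ∀ x ∈ Nperp, ∀ g ∈ N, Additive.ofMul (e x g) = (0 : Additive Circle) := by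
    intro x hx g hg
    rw [(hNperp x).mp hx g hg]
    rfl
  -- congruence in the first argument (second argument in N)
  have congl : ∀ x y : Ghat, ((x : Ghat ⧸ Nperp) = (y : Ghat ⧸ Nperp)) → ∀ g ∈ N,
      Additive.ofMul (e x g) = Additive.ofMul (e y g) := by
    intro x y hxy g hg
    have h : -x + y ∈ Nperp := by rwa [QuotientAddGroup.eq] at hxy
    have h2 : x + (-x + y) = y := add_neg_cancel_left x y
    rw [← h2, Ea, TeN _ h g hg, add_zero]
  -- congruence in the second argument (first argument in Nperp)
  have congr' : ∀ x ∈ Nperp, ∀ g g' : G, ((g : G ⧸ N) = (g' : G ⧸ N)) →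
      Additive.ofMul (e x g) = Additive.ofMul (e x g') := by
    intro x hx g g' hgg
    have h : -g + g' ∈ N := by rwa [QuotientAddGroup.eq] at hgg
    have h2 : g + (-g + g') = g' := add_neg_cancel_left g g'
    rw [← h2, Ea', TeN _ hx _ h, add_zero]
  -- the pairings expressed via `e` and the sections
  have hePQ' : ∀ (p : Nperp) (z : G ⧸ N), ePQ p z = e (p : Ghat) (σ z) := by
    intro p z
    have h := hePQ p (σ z)
    rwa [hσ] at h
  have heQN' : ∀ (zh : Ghat ⧸ Nperp) (n : N), eQN zh n = e (σh zh) (n : G) := by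
    intro zh n
    have h := heQN (σh zh) n
    rwa [hσh] at h
  have hσ0 : σ (0 : G ⧸ N) ∈ N := by
    have h := hσ 0
    rwa [QuotientAddGroup.eq_zero_iff] at h
  have mk_zsmul : ∀ (x : Ghat) (n : ℤ),
      ((n • x : Ghat) : Ghat ⧸ Nperp) = n • (x : Ghat ⧸ Nperp) := by
    intro x n
    rw [← QuotientAddGroup.mk'_apply, ← QuotientAddGroup.mk'_apply, map_zsmul]
  constructor
  · intro a b c zh
    have d1 : Additive.ofMul (e (σh (zh + L • χhat a)) (σ (χ c) - σ (χ (c * b)) + σ (χ b)))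
        = Additive.ofMul (e (σh zh + L • σh (χhat a)) (σ (χ c) - σ (χ (c * b)) + σ (χ b))) := by
      refine congl _ _ ?_ _ (hη b c)
      simp [QuotientAddGroup.mk_add, mk_zsmul, hσh]
    have d2 : Additive.ofMul (e (σh (zh + χhat a)) (σ (χ c) - σ (χ (c * b)) + σ (χ b)))
        = Additive.ofMul (e (σh zh + σh (χhat a)) (σ (χ c) - σ (χ (c * b)) + σ (χ b))) := by
      refine congl _ _ ?_ _ (hη b c)
      simp [QuotientAddGroup.mk_add, hσh]
    have d01 : Additive.ofMul (e (σh (χhat c) - σh (χhat (c * b)) + σh (χhat b)) (σ 0))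
        = (0 : Additive Circle) := TeN _ (hηhat b c) _ hσ0
    have d02 : Additive.ofMul
          (e (σh (χhat c) - σh (χhat (c * (b * a))) + σh (χhat (b * a))) (σ 0))
        = (0 : Additive Circle) := TeN _ (hηhat (b * a) c) _ hσ0
    have hm3 : σh (χhat (c * b)) - σh (χhat (c * (b * a))) + σh (χhat a) ∈ Nperp := by
      have h := hηhat a (c * b)
      rwa [mul_assoc] at h
    have d03 : Additive.ofMul
          (e (σh (χhat (c * b)) - σh (χhat (c * (b * a))) + σh (χhat a)) (σ 0))
        = (0 : Additive Circle) := TeN _ hm3 _ hσ0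
    have d04 : Additive.ofMul (e (σh (χhat b) - σh (χhat (b * a)) + σh (χhat a)) (σ 0))
        = (0 : Additive Circle) := TeN _ (hηhat a b) _ hσ0
    have h1 := congrArg Additive.ofMul (hreg b c 0 (zh + χhat a))
    have h2 := congrArg Additive.ofMul (hreg (b * a) c 0 zh)
    have h3 := congrArg Additive.ofMul (hreg a (c * b) 0 zh)
    have h4 := congrArg Additive.ofMul (hreg a b 0 zh)
    have Hc := congrArg Additive.ofMul (hcoc a b c zh)
    simp only [hsq, hePQ', heQN', ofMul_mul, ofMul_inv, ofMul_zpow, ofMul_one,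
      d01, d02, d03, d04, d2, mul_assoc, Ea, Es, Ez, Ea', Es'] at h1 h2 h3 h4 Hc
    simp only [hψ', heQN', ofMul_mul, ofMul_inv, ofMul_zpow]
    apply Additive.ofMul.injective
    simp only [ofMul_mul, ofMul_inv, ofMul_zpow, ofMul_one, d1, mul_assoc, Ea, Es, Ez, Ea', Es']
    linear_combination (norm := module) Hc + h1 - h2 + h3 - h4
  · intro a b z zh
    simp only [hψ', hνdef, hsqL, hγ, hγL, hePQ', heQN']
    apply Additive.ofMul.injective
    simp only [ofMul_mul, ofMul_inv, ofMul_zpow]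
    have c1 : Additive.ofMul (e (L • σh (χhat b) - σh (L • χhat b)) (σ (z + χ a + χ b)))
        = Additive.ofMul (e (L • σh (χhat b) - σh (L • χhat b)) (σ z + σ (χ a) + σ (χ b))) := by
      refine congr' _ (hν b) _ _ ?_
      simp [QuotientAddGroup.mk_add, hσ]
    have c2 : Additive.ofMul (e (L • σh (χhat (b * a)) - σh (L • χhat (b * a))) (σ (z + χ (b * a))))
        = Additive.ofMul (e (L • σh (χhat (b * a)) - σh (L • χhat (b * a)))
            (σ z + σ (χ a) + σ (χ b))) := by
      refine congr' _ (hν (b * a)) _ _ ?_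
      simp [QuotientAddGroup.mk_add, hσ, hχ b a]
      abel
    have c3 : Additive.ofMul (e (L • σh (χhat a) - σh (L • χhat a)) (σ (z + χ a)))
        = Additive.ofMul (e (L • σh (χhat a) - σh (L • χhat a)) (σ z + σ (χ a))) := by
      refine congr' _ (hν a) _ _ ?_
      simp [QuotientAddGroup.mk_add, hσ]
    have c4 : Additive.ofMul (e (σh (χhat b) - σh (χhat (b * a)) + σh (χhat a)) (σ (χ (b * a))))
        = Additive.ofMul (e (σh (χhat b) - σh (χhat (b * a)) + σh (χhat a))
            (σ (χ a) + σ (χ b))) := by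
      refine congr' _ (hηhat a b) _ _ ?_
      simp [QuotientAddGroup.mk_add, hσ, hχ b a]
      abel
    have c5 : Additive.ofMul (e (σh (L • χhat b) - σh (L • χhat (b * a)) + σh (L • χhat a))
          (σ (χ (b * a))))
        = Additive.ofMul (e (σh (L • χhat b) - σh (L • χhat (b * a)) + σh (L • χhat a))
            (σ (χ a) + σ (χ b))) := by
      refine congr' _ (hηhatL a b) _ _ ?_
      simp [QuotientAddGroup.mk_add, hσ, hχ b a]
      abel
    have c6 : Additive.ofMul (e (σh (χhat b) - σh (χhat (b * a)) + σh (χhat a)) (σ 0))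
        = (0 : Additive Circle) := TeN _ (hηhat a b) _ hσ0
    have hr1 := congrArg Additive.ofMul (hreg a b z zh)
    have hr0 := congrArg Additive.ofMul (hreg a b 0 zh)
    simp only [hsq, hγ, hePQ', heQN', ofMul_mul, ofMul_inv, ofMul_zpow, c4, c6,
      Ea, Es, Ez, Ea', Es'] at hr1 hr0
    simp only [c1, c2, c3, c4, c5, Ea, Es, Ez, Ea', Es']
    linear_combination (norm := module) hr1 - hr0
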